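/- Let O ⊆ P contain A. For any integral dominant weights λ and μ, the lattice points of the marked chain-order polytope satisfy the Minkowski sum property: 𝒬_O(λ+μ) ∩ ℤ^P = (𝒬_O(λ) ∩ ℤ^P) + (𝒬_O(μ) ∩ ℤ^P). -/

import Mathlib

open scoped Classical Pointwise

noncomputable section

/-- Position of `j` in the total order `1 ⋖ … ⋖ n ⋖ -n ⋖ … ⋖ -1` on `N`. -/
def ordKey (n : ℕ) (j : ℤ) : ℤ := if 0 < j then j else 2 * n + 1 + j

/-- Membership in the type C Gelfand–Tsetlin poset `P`:
pairs `(i,j)` with `1 ≤ i ≤ n` and `i ≤ |j| ≤ n`. -/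
def inP (n : ℕ) (p : ℤ × ℤ) : Prop :=
  1 ≤ p.1 ∧ p.1 ≤ (n : ℤ) ∧ p.1 ≤ |p.2| ∧ |p.2| ≤ (n : ℤ)

/-- The order relation `⪯` of `P`: `(i₁,j₁) ⪯ (i₂,j₂)` iff `i₁ ≤ i₂` and `j₁ ⩽̇ j₂`. -/
def ple (n : ℕ) (p q : ℤ × ℤ) : Prop :=
  p.1 ≤ q.1 ∧ ordKey n p.2 ≤ ordKey n q.2

/-- Strict version of `⪯`. -/
def plt (n : ℕ) (p q : ℤ × ℤ) : Prop := ple n p q ∧ p ≠ q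

/-- The elements of `N = {1,…,n,-n,…,-1}` listed in increasing `⋖` order. -/
def jList (n : ℕ) : List ℤ :=
  ((List.range n).map fun t => (t : ℤ) + 1) ++ ((List.range n).map fun t => (t : ℤ) - n)

/-- All pairs `(i,j)` with `i ∈ [1,n]`, `j ∈ N`, ordered first by `i` increasing,
then by `j` increasing with respect to `⋖`. -/
def posList (n : ℕ) : List (ℤ × ℤ) :=
  (List.range n).flatMap fun a => (jList n).map fun j => ((a : ℤ) + 1, j)

/-- `P` as a finite set. -/
def Pfin (n : ℕ) : Finset (ℤ × ℤ) := (posList n).toFinset.filter (inP n)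

/-- `N` as a finite set. -/
def Nfin (n : ℕ) : Finset ℤ := (jList n).toFinset

/-- The diagonal `A = {(i,i) : 1 ≤ i ≤ n}`. -/
def Aset (n : ℕ) : Finset (ℤ × ℤ) :=
  (Finset.range n).image fun t => (((t : ℤ) + 1, (t : ℤ) + 1) : ℤ × ℤ)

/-- Order ideals (downward closed subsets) of `P`. -/
def IsIdeal (n : ℕ) (J : Finset (ℤ × ℤ)) : Prop :=
  (∀ p ∈ J, inP n p) ∧ ∀ p ∈ J, ∀ q ∈ Pfin n, ple n q p → q ∈ J

/-- The set of `≺`-maximal elements of `J`. -/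
def maxPrec (n : ℕ) (J : Finset (ℤ × ℤ)) : Finset (ℤ × ℤ) :=
  J.filter fun p => ∀ q ∈ J, ple n p q → q = p

/-- `M_O(J) = (J ∩ O) ∪ max_≺(J)`. -/
def MO (n : ℕ) (O J : Finset (ℤ × ℤ)) : Finset (ℤ × ℤ) := (J ∩ O) ∪ maxPrec n J

/-- The permutation `w_M`: the product of the transpositions `s_{i,j}` over `(i,j) ∈ M`,
ordered first by `i` increasing and then by `j` increasing with respect to `⋖`
(the leftmost factor acts last). -/
def wPerm (n : ℕ) (M : Finset (ℤ × ℤ)) : Equiv.Perm ℤ :=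
  (((posList n).filter fun p => decide (p ∈ M)).map fun p => Equiv.swap p.1 p.2).prod

/-- `w^{O,J} = w_O⁻¹ ⬝ w_{M_O(J)}`. -/
def wOJ (n : ℕ) (O J : Finset (ℤ × ℤ)) : Equiv.Perm ℤ :=
  (wPerm n O)⁻¹ * wPerm n (MO n O J)

/-- The principal order ideal `⟨i,j⟩` of `(i,j) ∈ P`. -/
def princ (n : ℕ) (p : ℤ × ℤ) : Finset (ℤ × ℤ) := (Pfin n).filter fun q => ple n q p

/-- `r(i,j) = w^{O,⟨i,j⟩}(i)`. -/
def rMap (n : ℕ) (O : Finset (ℤ × ℤ)) (i j : ℤ) : ℤ := wOJ n O (princ n (i, j)) i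

/-- Inverse of `ordKey` (on the relevant range `[1, 2n]`). -/
def invOrdKey (n : ℕ) (t : ℤ) : ℤ := if t ≤ (n : ℤ) then t else t - (2 * n + 1)

/-- The `⋖`-maximal `j'` with `j' ⋖ j` and `(i,j') ∈ O`. -/
def prevO (n : ℕ) (O : Finset (ℤ × ℤ)) (i j : ℤ) : ℤ :=
  invOrdKey n (((((Nfin n).filter fun j' => (i, j') ∈ O ∧ ordKey n j' < ordKey n j).image
    (ordKey n)).max).unbotD 0)

/-- The pipe-dream linear transform `ξ` of `ℝ^P` (coordinates outside `P` are untouched):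
`ξ(ε_{i,i}) = ε_{i,r(i,i)}` and `ξ(ε_{i,j}) = ε_{i,r(i,j)} - ε_{i,r(i,j')}` for `j ≠ i`,
where `j'` is `⋖`-maximal with `j' ⋖ j` and `(i,j') ∈ O`. -/
def xiMap (n : ℕ) (O : Finset (ℤ × ℤ)) (x : (ℤ × ℤ) → ℝ) : (ℤ × ℤ) → ℝ := fun q =>
  if inP n q then
    (∑ j ∈ (Nfin n).filter (fun j => inP n (q.1, j) ∧ rMap n O q.1 j = q.2), x (q.1, j))
    - (∑ j ∈ (Nfin n).filter
        (fun j => inP n (q.1, j) ∧ j ≠ q.1 ∧ rMap n O q.1 (prevO n O q.1 j) = q.2), x (q.1, j))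
  else x q

/-- Indicator vector `1_{M_O(J)} ∈ ℝ^P`. -/
def indicMO (n : ℕ) (O J : Finset (ℤ × ℤ)) : (ℤ × ℤ) → ℝ := fun p =>
  if p ∈ MO n O J then 1 else 0

/-- The fundamental marked chain-order polytope `𝒬_O(ω_k)`:
the convex hull of the vectors `1_{M_O(J)}`, `J ∈ 𝒥ₖ`. -/
def QOfund (n : ℕ) (O : Finset (ℤ × ℤ)) (k : ℕ) : Set ((ℤ × ℤ) → ℝ) :=
  convexHull ℝ {x | ∃ J : Finset (ℤ × ℤ),
    IsIdeal n J ∧ (J ∩ Aset n).card = k ∧ x = indicMO n O J}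

/-- The marked chain-order polytope `𝒬_O(λ)` for `λ = a₁ω₁ + … + a_nω_n`:
the Minkowski sum `a₁𝒬_O(ω₁) + … + a_n𝒬_O(ω_n)`. -/
def QO (n : ℕ) (O : Finset (ℤ × ℤ)) (a : ℕ → ℕ) : Set ((ℤ × ℤ) → ℝ) :=
  ∑ k ∈ Finset.Icc 1 n, a k • QOfund n O k

/-- Integrality (lattice point) predicate. -/
def IsLat (x : (ℤ × ℤ) → ℝ) : Prop := ∀ p, ∃ m : ℤ, x p = m

/-- Type B: `λ(i) = a_i + … + a_{n-1} + a_n/2`. -/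
def lamB (n : ℕ) (a : ℕ → ℕ) (i : ℤ) : ℝ :=
  (∑ t ∈ Finset.Icc i.toNat (n - 1), (a t : ℝ)) + (a n : ℝ) / 2

/-- The type B poset polytope `𝒬^B_O(λ)` (H-description with factor `1/2`
on the coordinates in `B = {(i,-i)}`). -/
def QB (n : ℕ) (O : Finset (ℤ × ℤ)) (lam : ℤ → ℝ) : Set ((ℤ × ℤ) → ℝ) :=
  {x | (∀ i : ℤ, 1 ≤ i → i ≤ (n : ℤ) → x (i, i) = lam i) ∧
    (∀ p, inP n p → 0 ≤ x p) ∧ (∀ p, ¬ inP n p → x p = 0) ∧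
    ∀ (pq rs : ℤ × ℤ) (c : List (ℤ × ℤ)), pq ∈ O → inP n rs →
      (∀ q ∈ c, inP n q ∧ q ∉ O) →
      List.Chain' (plt n) (pq :: (c ++ [rs])) →
      (c.map x).sum ≤ x pq - (if rs.2 = -rs.1 then (1 : ℝ) / 2 else 1) * x rs}

/-- The point `x^{J,D}`. -/
def xJD (n : ℕ) (O J : Finset (ℤ × ℤ)) (D : Finset ℤ) : (ℤ × ℤ) → ℝ := fun p =>
  if p ∈ MO n O J then (if p.2 = -p.1 ∧ p.1 ∉ D then 2 else 1) else 0

/-- The projection `π : ℝ^P → ℝ^{P∖A}` (realized by zeroing the `A`-coordinates). -/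
def piA (x : (ℤ × ℤ) → ℝ) : (ℤ × ℤ) → ℝ := fun p => if p.2 = p.1 then 0 else x p

/-- The transformed type B poset polytope `Π^B_O(λ) = πξ(𝒬^B_O(λ))`. -/
def PiB (n : ℕ) (O : Finset (ℤ × ℤ)) (a : ℕ → ℕ) : Set ((ℤ × ℤ) → ℝ) :=
  (fun x => piA (xiMap n O x)) '' QB n O (lamB n a)

/-- The point `y^D ∈ ℝ^{P∖A}`. -/
def yD (D : Finset ℤ) : (ℤ × ℤ) → ℝ := fun p => if p.2 = -p.1 ∧ p.1 ∈ D then 1 else 0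


/-! ### Auxiliary development -/

section Aux

variable {n : ℕ} {O : Finset (ℤ × ℤ)} {p q r : ℤ × ℤ}



lemma mem_jList {j : ℤ} : j ∈ jList n ↔ ((1 ≤ j ∧ j ≤ (n : ℤ)) ∨ (-(n : ℤ) ≤ j ∧ j ≤ -1)) := by
  unfold jList
  simp only [List.mem_append, List.mem_map, bind, List.bind_eq_flatMap,
    List.mem_flatMap, List.mem_range, pure, List.singleton, List.mem_singleton]
  constructor
  · rintro (⟨t, ⟨s, hs, rfl⟩, rfl⟩ | ⟨t, ⟨s, hs, rfl⟩, rfl⟩) <;> omega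
  · rintro (⟨h1, h2⟩ | ⟨h1, h2⟩)
    · exact Or.inl ⟨(j - 1 : ℤ), ⟨(j - 1).toNat, by omega, by omega⟩, by omega⟩
    · exact Or.inr ⟨(j + n : ℤ), ⟨(j + n).toNat, by omega, by omega⟩, by omega⟩

lemma mem_posList : p ∈ posList n ↔ (1 ≤ p.1 ∧ p.1 ≤ (n : ℤ) ∧ p.2 ∈ jList n) := by
  unfold posList
  simp only [List.mem_flatMap, List.mem_map, bind, List.bind_eq_flatMap,
    List.mem_range, pure, List.singleton, List.mem_singleton]
  constructor
  · rintro ⟨a, ha, j, hj, rfl⟩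
    refine ⟨?_, ?_, by simpa using hj⟩ <;> simp <;> omega
  · rintro ⟨h1, h2, hj⟩
    refine ⟨p.1 - 1, ⟨(p.1 - 1).toNat, by omega, by omega⟩, p.2, hj, ?_⟩
    have : (((p.1 - 1).toNat : ℤ) + 1, p.2) = (p.1, p.2) := by
      have : ((p.1 - 1).toNat : ℤ) + 1 = p.1 := by omega
      rw [this]
    simpa using this

lemma inP_side (h : inP n p) :
    p.2 ≠ 0 ∧ -(n : ℤ) ≤ p.2 ∧ p.2 ≤ (n : ℤ) ∧ 1 ≤ p.1 ∧ p.1 ≤ (n : ℤ) := by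
  obtain ⟨h1, h2, h3, h4⟩ := h
  rcases abs_cases p.2 with ⟨he, _⟩ | ⟨he, _⟩ <;> omega

lemma mem_Pfin : p ∈ Pfin n ↔ inP n p := by
  unfold Pfin
  rw [Finset.mem_filter, List.mem_toFinset, mem_posList]
  constructor
  · tauto
  · intro h
    obtain ⟨hz, hb1, hb2, hi1, hi2⟩ := inP_side h
    refine ⟨⟨hi1, hi2, ?_⟩, h⟩
    rw [mem_jList]; omega

lemma mem_Aset : p ∈ Aset n ↔ (1 ≤ p.1 ∧ p.1 ≤ (n : ℤ) ∧ p.2 = p.1) := by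
  unfold Aset
  simp only [Finset.mem_image, Finset.bind_def, Finset.sup_eq_biUnion, Finset.mem_biUnion,
    Finset.mem_range, pure, Finset.mem_singleton]
  constructor
  · rintro ⟨t, ⟨s, hs, rfl⟩, rfl⟩
    refine ⟨?_, ?_, rfl⟩ <;> simp <;> omega
  · rintro ⟨h1, h2, h3⟩
    refine ⟨p.1 - 1, ⟨(p.1 - 1).toNat, by omega, by omega⟩, ?_⟩
    obtain ⟨x, y⟩ := p
    simp only [Prod.mk.injEq] at h3 ⊢
    simp only at h1 h2 h3
    constructor <;> omega

lemma ordKey_inj {j j' : ℤ} (hj : j ≠ 0) (hj2 : -(n:ℤ) ≤ j) (hj3 : j ≤ (n:ℤ))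
    (hj' : j' ≠ 0) (hj2' : -(n:ℤ) ≤ j') (hj3' : j' ≤ (n:ℤ))
    (h : ordKey n j = ordKey n j') : j = j' := by
  unfold ordKey at h; split_ifs at h <;> omega

lemma ple_refl : ple n p p := ⟨le_rfl, le_rfl⟩

lemma ple_trans (h : ple n p q) (h' : ple n q r) : ple n p r :=
  ⟨h.1.trans h'.1, h.2.trans h'.2⟩

lemma ple_antisymm (hp : inP n p) (hq : inP n q) (h : ple n p q) (h' : ple n q p) : p = q := by
  obtain ⟨hz, hb1, hb2, _, _⟩ := inP_side hp
  obtain ⟨hz', hb1', hb2', _, _⟩ := inP_side hq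
  have e1 : p.1 = q.1 := le_antisymm h.1 h'.1
  have e2 : p.2 = q.2 := ordKey_inj hz hb1 hb2 hz' hb1' hb2' (le_antisymm h.2 h'.2)
  exact Prod.ext e1 e2

lemma plt_measure (hp : inP n p) (hq : inP n q) (h : ple n p q) (hne : p ≠ q) :
    p.1 + ordKey n p.2 < q.1 + ordKey n q.2 := by
  obtain ⟨hz, hb1, hb2, _, _⟩ := inP_side hp
  obtain ⟨hz', hb1', hb2', _, _⟩ := inP_side hq
  obtain ⟨h1, h2⟩ := h
  rcases eq_or_lt_of_le h1 with e1 | l1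
  · rcases eq_or_lt_of_le h2 with e2 | l2
    · exact absurd (Prod.ext e1 (ordKey_inj hz hb1 hb2 hz' hb1' hb2' e2)) hne
    · omega
  · omega

lemma chain_min {C : Finset (ℤ × ℤ)} (hC : C ⊆ Pfin n) (hne : C.Nonempty)
    (hch : ∀ q ∈ C, ∀ r ∈ C, ple n q r ∨ ple n r q) : ∃ q ∈ C, ∀ r ∈ C, ple n q r := by
  obtain ⟨q, hqC, hmin⟩ := C.exists_min_image (fun r => r.1 + ordKey n r.2) hne
  refine ⟨q, hqC, fun r hr => ?_⟩
  rcases hch q hqC r hr with h | h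
  · exact h
  · rcases eq_or_ne r q with rfl | hne2
    · exact ple_refl
    · exact absurd (plt_measure (mem_Pfin.mp (hC hr)) (mem_Pfin.mp (hC hqC)) h hne2)
        (not_lt.mpr (hmin r hr))

end Aux

/-- Strict chains above `p` whose `O`-elements can only be at the top. -/
def SChain (n : ℕ) (O : Finset (ℤ × ℤ)) (p : ℤ × ℤ) (C : Finset (ℤ × ℤ)) : Prop :=
  C ⊆ Pfin n ∧ (∀ q ∈ C, ple n p q ∧ p ≠ q) ∧ (∀ q ∈ C, ∀ r ∈ C, ple n q r ∨ ple n r q) ∧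
  (∀ q ∈ C, q ∈ O → ∀ r ∈ C, ple n q r → r = q)

/-- Valid inequalities satisfied by all marked chain-order polytopes. -/
def Hpoly (n : ℕ) (O : Finset (ℤ × ℤ)) (lam : ℕ → ℝ) : Set ((ℤ × ℤ) → ℝ) :=
  {x | (∀ p, inP n p → 0 ≤ x p) ∧ (∀ p, ¬ inP n p → x p = 0) ∧
    (∀ i ∈ Finset.Icc 1 n, x ((i : ℤ), (i : ℤ)) = lam i) ∧
    (∀ p ∈ O, ∀ C : Finset (ℤ × ℤ), SChain n O p C → ∑ q ∈ C, x q ≤ x p)}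

section Aux2

variable {n : ℕ} {O : Finset (ℤ × ℤ)} {p q r : ℤ × ℤ}

lemma Hpoly_convex (lam : ℕ → ℝ) : Convex ℝ (Hpoly n O lam) := by
  rintro x ⟨hx0, hxz, hxd, hxc⟩ y ⟨hy0, hyz, hyd, hyc⟩ a b ha hb hab
  have habx : ∀ p, (a • x + b • y) p = a * x p + b * y p := fun p => rfl
  refine ⟨?_, ?_, ?_, ?_⟩
  · intro p hp; rw [habx]; have := hx0 p hp; have := hy0 p hp; positivity
  · intro p hp; rw [habx, hxz p hp, hyz p hp]; ring
  · intro i hi; rw [habx, hxd i hi, hyd i hi]; rw [← add_mul, hab, one_mul]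
  · intro p hp C hC
    have : ∑ q ∈ C, (a • x + b • y) q = a * ∑ q ∈ C, x q + b * ∑ q ∈ C, y q := by
      simp only [habx, Finset.sum_add_distrib, Finset.mul_sum]
    rw [this, habx]
    have h1 := hxc p hp C hC
    have h2 := hyc p hp C hC
    have := mul_le_mul_of_nonneg_left h1 ha
    have := mul_le_mul_of_nonneg_left h2 hb
    linarith

lemma Hpoly_add {x y : (ℤ × ℤ) → ℝ} {lam lam' : ℕ → ℝ} (hx : x ∈ Hpoly n O lam)
    (hy : y ∈ Hpoly n O lam') : x + y ∈ Hpoly n O (lam + lam') := by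
  obtain ⟨hx0, hxz, hxd, hxc⟩ := hx
  obtain ⟨hy0, hyz, hyd, hyc⟩ := hy
  refine ⟨?_, ?_, ?_, ?_⟩
  · intro p hp; have := hx0 p hp; have := hy0 p hp
    simp only [Pi.add_apply]; linarith
  · intro p hp; simp only [Pi.add_apply, hxz p hp, hyz p hp, add_zero]
  · intro i hi; simp only [Pi.add_apply, hxd i hi, hyd i hi]
  · intro p hp C hC
    have h1 := hxc p hp C hC
    have h2 := hyc p hp C hC
    simp only [Pi.add_apply, Finset.sum_add_distrib]
    linarith

lemma Hpoly_zero : (0 : (ℤ × ℤ) → ℝ) ∈ Hpoly n O 0 := by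
  refine ⟨fun p _ => le_rfl, fun p _ => rfl, fun i _ => rfl, fun p _ C _ => ?_⟩
  simp

lemma Hpoly_nsmul {S : Set ((ℤ × ℤ) → ℝ)} {lam : ℕ → ℝ} (hS : S ⊆ Hpoly n O lam) :
    ∀ m : ℕ, m • S ⊆ Hpoly n O (m • lam)
  | 0 => by
    intro x hx
    rw [zero_nsmul] at hx
    rw [Set.mem_zero.mp hx, zero_smul]
    exact Hpoly_zero
  | (m + 1) => by
    intro x hx
    rw [succ_nsmul] at hx
    obtain ⟨y, hy, z, hz, rfl⟩ := Set.mem_add.mp hx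
    rw [succ_nsmul]
    exact Hpoly_add (Hpoly_nsmul hS m hy) (hS hz)

lemma MO_subset {J : Finset (ℤ × ℤ)} (h : p ∈ MO n O J) : p ∈ J := by
  rcases Finset.mem_union.mp h with h | h
  · exact (Finset.mem_inter.mp h).1
  · exact (Finset.mem_filter.mp h).1

lemma mem_MO_of_O (hpO : p ∈ O) {J : Finset (ℤ × ℤ)} : p ∈ MO n O J ↔ p ∈ J :=
  ⟨MO_subset, fun h => Finset.mem_union.mpr (Or.inl (Finset.mem_inter.mpr ⟨h, hpO⟩))⟩

lemma mem_MO_of_notO (hpO : p ∉ O) {J : Finset (ℤ × ℤ)} :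
    p ∈ MO n O J ↔ (p ∈ J ∧ ∀ q ∈ J, ple n p q → q = p) := by
  constructor
  · intro h
    rcases Finset.mem_union.mp h with h | h
    · exact absurd (Finset.mem_inter.mp h).2 hpO
    · exact Finset.mem_filter.mp h
  · intro h
    exact Finset.mem_union.mpr (Or.inr (Finset.mem_filter.mpr h))

lemma diag_prefix {J : Finset (ℤ × ℤ)} (hJ : IsIdeal n J) {i i' : ℕ}
    (hi : (((i : ℕ) : ℤ), ((i : ℕ) : ℤ)) ∈ J) (h1 : 1 ≤ i') (h2 : i' ≤ i) :
    (((i' : ℕ) : ℤ), ((i' : ℕ) : ℤ)) ∈ J := by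
  have hiP : inP n (((i : ℕ) : ℤ), ((i : ℕ) : ℤ)) := hJ.1 _ hi
  obtain ⟨_, _, hb2, _, hin⟩ := inP_side hiP
  apply hJ.2 _ hi
  · apply mem_Pfin.mpr
    unfold inP
    dsimp only
    rw [abs_of_nonneg (by positivity : (0:ℤ) ≤ (i' : ℤ))]
    refine ⟨by exact_mod_cast h1, by omega, le_rfl, by omega⟩
  · unfold ple ordKey
    dsimp only
    refine ⟨by omega, ?_⟩
    split_ifs <;> omega

lemma prefix_card {S : Finset ℕ} (hsub : S ⊆ Finset.Icc 1 n)
    (hpre : ∀ i ∈ S, ∀ i', 1 ≤ i' → i' ≤ i → i' ∈ S) : S = Finset.Icc 1 S.card := by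
  rcases S.eq_empty_or_nonempty with rfl | hne
  · simp
  · have hM : S.max' hne ∈ S := S.max'_mem hne
    have hS : S = Finset.Icc 1 (S.max' hne) := by
      ext i; rw [Finset.mem_Icc]
      constructor
      · intro hi; exact ⟨(Finset.mem_Icc.mp (hsub hi)).1, S.le_max' i hi⟩
      · rintro ⟨h1, h2⟩; exact hpre _ hM i h1 h2
    have hc : S.card = S.max' hne := by
      conv_lhs => rw [hS]
      rw [Nat.card_Icc]
      omega
    rw [hc]; exact hS

lemma diag_mem_iff {J : Finset (ℤ × ℤ)} (hJ : IsIdeal n J) {k : ℕ}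
    (hk : (J ∩ Aset n).card = k) {i : ℕ} (hi1 : 1 ≤ i) (hi2 : i ≤ n) :
    ((((i : ℕ) : ℤ), ((i : ℕ) : ℤ)) ∈ J ↔ i ≤ k) := by
  classical
  set D := (Finset.Icc 1 n).filter (fun i : ℕ => (((i : ℤ), (i : ℤ)) : ℤ × ℤ) ∈ J) with hD
  have himg : J ∩ Aset n = D.image (fun i : ℕ => (((i : ℤ), (i : ℤ)) : ℤ × ℤ)) := by
    ext p
    simp only [Finset.mem_inter, Finset.mem_image, hD, Finset.mem_filter, Finset.mem_Icc]
    constructor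
    · rintro ⟨hpJ, hpA⟩
      obtain ⟨a1, a2, a3⟩ := mem_Aset.mp hpA
      have e : ((p.1.toNat : ℤ), (p.1.toNat : ℤ)) = p := by
        have h : (p.1.toNat : ℤ) = p.1 := by omega
        rw [h]; exact Prod.ext rfl a3.symm
      refine ⟨p.1.toNat, ⟨⟨by omega, by omega⟩, ?_⟩, e⟩
      rw [e]; exact hpJ
    · rintro ⟨i, ⟨⟨hi1', hi2'⟩, hiJ⟩, rfl⟩
      refine ⟨hiJ, mem_Aset.mpr ⟨?_, ?_, rfl⟩⟩ <;> simp <;> omega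
  have hinj : Function.Injective (fun i : ℕ => (((i : ℤ), (i : ℤ)) : ℤ × ℤ)) := by
    intro a b hab
    simp only [Prod.mk.injEq] at hab
    exact_mod_cast hab.1
  have hcard : D.card = k := by
    rw [← hk, himg, Finset.card_image_of_injective _ hinj]
  have hpre : ∀ i ∈ D, ∀ i', 1 ≤ i' → i' ≤ i → i' ∈ D := by
    intro i hi i' h1 h2
    obtain ⟨hIcc, hiJ⟩ := Finset.mem_filter.mp hi
    obtain ⟨hI1, hI2⟩ := Finset.mem_Icc.mp hIcc
    exact Finset.mem_filter.mpr ⟨Finset.mem_Icc.mpr ⟨h1, le_trans h2 hI2⟩,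
      diag_prefix hJ hiJ h1 h2⟩
  have hDicc : D = Finset.Icc 1 k := by
    have := prefix_card (Finset.filter_subset _ _) hpre
    rwa [hcard] at this
  constructor
  · intro hiJ
    have : i ∈ D := Finset.mem_filter.mpr ⟨Finset.mem_Icc.mpr ⟨hi1, hi2⟩, hiJ⟩
    rw [hDicc, Finset.mem_Icc] at this
    exact this.2
  · intro hik
    have : i ∈ D := by rw [hDicc, Finset.mem_Icc]; exact ⟨hi1, hik⟩
    exact (Finset.mem_filter.mp this).2

lemma gen_mem_Hpoly (hA : Aset n ⊆ O) (hO : O ⊆ Pfin n) {J : Finset (ℤ × ℤ)} {k : ℕ}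
    (hJ : IsIdeal n J) (hk : (J ∩ Aset n).card = k) :
    indicMO n O J ∈ Hpoly n O (fun i => if i ≤ k then 1 else 0) := by
  classical
  have hind0 : ∀ p, (0:ℝ) ≤ indicMO n O J p := by
    intro p; unfold indicMO; split_ifs <;> norm_num
  refine ⟨fun p _ => hind0 p, ?_, ?_, ?_⟩
  · intro p hp; unfold indicMO; rw [if_neg]
    intro hmem; exact hp (hJ.1 p (MO_subset hmem))
  · intro i hi
    obtain ⟨hi1, hi2⟩ := Finset.mem_Icc.mp hi
    have hdO : (((i:ℤ), (i:ℤ)) : ℤ × ℤ) ∈ O := by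
      apply hA; apply mem_Aset.mpr
      refine ⟨?_, ?_, rfl⟩ <;> simp <;> omega
    unfold indicMO
    show (if (((i:ℤ), (i:ℤ)) : ℤ × ℤ) ∈ MO n O J then (1:ℝ) else 0)
      = if i ≤ k then (1:ℝ) else 0
    by_cases hle : i ≤ k
    · rw [if_pos ((mem_MO_of_O hdO).mpr ((diag_mem_iff hJ hk hi1 hi2).mpr hle)), if_pos hle]
    · rw [if_neg (fun hmem => hle ((diag_mem_iff hJ hk hi1 hi2).mp (MO_subset hmem))),
        if_neg hle]
  · intro p hpO C hC
    obtain ⟨hCP, hstrict, hchain, htop⟩ := hC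
    have hsum : ∑ q ∈ C, indicMO n O J q
        = ((C.filter (fun q => q ∈ MO n O J)).card : ℝ) := by
      unfold indicMO
      rw [Finset.sum_boole]
    rcases (C.filter (fun q => q ∈ MO n O J)).eq_empty_or_nonempty with he | ⟨s, hs⟩
    · rw [hsum, he]; simpa using hind0 p
    · obtain ⟨hsC, hsM⟩ := Finset.mem_filter.mp hs
      have hpJ : p ∈ J := hJ.2 s (MO_subset hsM) p (hO hpO) (hstrict s hsC).1
      have key : ∀ a b, a ∈ C → a ∈ MO n O J → b ∈ C → b ∈ MO n O J → ple n a b → a = b := by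
        intro a b haC haM hbC hbM hab
        rcases Finset.mem_union.mp haM with h | h
        · exact (htop a haC (Finset.mem_inter.mp h).2 b hbC hab).symm
        · exact ((Finset.mem_filter.mp h).2 b (MO_subset hbM) hab).symm
      have hcard : (C.filter (fun q => q ∈ MO n O J)).card ≤ 1 := by
        rw [Finset.card_le_one]
        intro a ha b hb
        obtain ⟨haC, haM⟩ := Finset.mem_filter.mp ha
        obtain ⟨hbC, hbM⟩ := Finset.mem_filter.mp hb
        rcases hchain a haC b hbC with h | h
        · exact key a b haC haM hbC hbM h
        · exact (key b a hbC hbM haC haM h).symm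
      rw [hsum]
      have hp1 : indicMO n O J p = 1 := by
        unfold indicMO; rw [if_pos ((mem_MO_of_O hpO).mpr hpJ)]
      rw [hp1]
      exact_mod_cast hcard

lemma QOfund_sub (hA : Aset n ⊆ O) (hO : O ⊆ Pfin n) (k : ℕ) :
    QOfund n O k ⊆ Hpoly n O (fun i => if i ≤ k then 1 else 0) := by
  apply convexHull_min ?_ (Hpoly_convex _)
  rintro x ⟨J, hJ, hk, rfl⟩
  exact gen_mem_Hpoly hA hO hJ hk

lemma sum_sub_Hpoly {s : Finset ℕ} {F : ℕ → Set ((ℤ × ℤ) → ℝ)} {g : ℕ → ℕ → ℝ}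
    (h : ∀ k ∈ s, F k ⊆ Hpoly n O (g k)) :
    (∑ k ∈ s, F k) ⊆ Hpoly n O (∑ k ∈ s, g k) := by
  classical
  induction s using Finset.induction_on with
  | empty =>
    intro x hx
    rw [Finset.sum_empty] at hx
    rw [Finset.sum_empty]
    rw [Set.mem_zero.mp hx]
    exact Hpoly_zero
  | insert a s' hnm ih =>
    rw [Finset.sum_insert hnm, Finset.sum_insert hnm]
    intro x hx
    obtain ⟨y, hy, z, hz, rfl⟩ := Set.mem_add.mp hx
    exact Hpoly_add (h a (Finset.mem_insert_self a s') hy)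
      (ih (fun k hk => h k (Finset.mem_insert_of_mem hk)) hz)

lemma QO_valid (hA : Aset n ⊆ O) (hO : O ⊆ Pfin n) (c : ℕ → ℕ) {x : (ℤ × ℤ) → ℝ}
    (hx : x ∈ QO n O c) :
    (∀ p, inP n p → 0 ≤ x p) ∧ (∀ p, ¬ inP n p → x p = 0) ∧
    (∀ i ∈ Finset.Icc 1 n, x ((i : ℤ), (i : ℤ)) = ((∑ k ∈ Finset.Icc i n, c k : ℕ) : ℝ)) ∧
    (∀ p ∈ O, ∀ C : Finset (ℤ × ℤ), SChain n O p C → ∑ q ∈ C, x q ≤ x p) := by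
  have h1 : x ∈ Hpoly n O (∑ k ∈ Finset.Icc 1 n,
      (c k) • (fun i => if i ≤ k then (1:ℝ) else 0)) := by
    apply sum_sub_Hpoly (fun k _ => Hpoly_nsmul (QOfund_sub hA hO k) (c k))
    exact hx
  obtain ⟨ha, hb, hd, hc⟩ := h1
  refine ⟨ha, hb, ?_, hc⟩
  intro i hi
  obtain ⟨hi1, hi2⟩ := Finset.mem_Icc.mp hi
  rw [hd i hi, Finset.sum_apply]
  have hfil : (Finset.Icc 1 n).filter (fun k => i ≤ k) = Finset.Icc i n := by
    ext k; simp only [Finset.mem_Icc, Finset.mem_filter]; omega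
  calc ∑ k ∈ Finset.Icc 1 n, ((c k) • fun i => if i ≤ k then (1:ℝ) else 0) i
      = ∑ k ∈ Finset.Icc 1 n, (if i ≤ k then (c k : ℝ) else 0) := by
        apply Finset.sum_congr rfl
        intro k hk
        have hb : ((c k) • fun i => if i ≤ k then (1:ℝ) else 0) i
            = (c k : ℝ) * (if i ≤ k then (1:ℝ) else 0) := by
          simp [nsmul_eq_mul]
        rw [hb]
        split_ifs <;> ring
    _ = ∑ k ∈ (Finset.Icc 1 n).filter (fun k => i ≤ k), (c k : ℝ) :=
        (Finset.sum_filter _ _).symm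
    _ = ((∑ k ∈ Finset.Icc i n, c k : ℕ) : ℝ) := by
        rw [hfil]; push_cast; rfl

end Aux2

/-- Admissible chains starting at `p`: chains in `P` with minimum `p`,
whose `O`-elements can only appear at the top. -/
def AdmSet (n : ℕ) (O : Finset (ℤ × ℤ)) (p : ℤ × ℤ) : Finset (Finset (ℤ × ℤ)) :=
  (Pfin n).powerset.filter (fun C => p ∈ C ∧ (∀ q ∈ C, ple n p q) ∧
    (∀ q ∈ C, ∀ r ∈ C, ple n q r ∨ ple n r q) ∧ (∀ q ∈ C, q ∈ O → ∀ r ∈ C, ple n q r → r = q))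

/-- The transfer function: max over admissible chains of the sum of values. -/
def Uval (n : ℕ) (O : Finset (ℤ × ℤ)) (X : (ℤ × ℤ) → ℤ) (p : ℤ × ℤ) : ℤ :=
  (((AdmSet n O p).image (fun C => ∑ q ∈ C, X q)).max).unbotD 0

/-- Max of the transfer function strictly above `p`. -/
def Vval (n : ℕ) (O : Finset (ℤ × ℤ)) (X : (ℤ × ℤ) → ℤ) (p : ℤ × ℤ) : ℤ :=
  ((((Pfin n).filter (fun q => ple n p q ∧ p ≠ q)).image (Uval n O X)).max).unbotD 0

section Aux3

variable {n : ℕ} {O : Finset (ℤ × ℤ)} {p q r : ℤ × ℤ} {X : (ℤ × ℤ) → ℤ}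

lemma le_maxunbot {s : Finset ℤ} {a : ℤ} (h : a ∈ s) : a ≤ (s.max).unbotD 0 := by
  have hne : s.Nonempty := ⟨a, h⟩
  rw [← Finset.coe_max' hne, WithBot.unbotD_coe]
  exact Finset.le_max' s a h

lemma maxunbot_le {s : Finset ℤ} {B : ℤ} (h0 : 0 ≤ B) (h : ∀ a ∈ s, a ≤ B) :
    (s.max).unbotD 0 ≤ B := by
  rcases s.eq_empty_or_nonempty with rfl | hne
  · simpa using h0
  · rw [← Finset.coe_max' hne, WithBot.unbotD_coe]
    exact h _ (s.max'_mem hne)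

lemma maxunbot_nonneg {s : Finset ℤ} (h : ∀ a ∈ s, 0 ≤ a) : 0 ≤ (s.max).unbotD 0 := by
  rcases s.eq_empty_or_nonempty with rfl | hne
  · simp
  · rw [← Finset.coe_max' hne, WithBot.unbotD_coe]
    exact h _ (s.max'_mem hne)

lemma maxunbot_attain {s : Finset ℤ} (hne : s.Nonempty) : (s.max).unbotD 0 ∈ s := by
  rw [← Finset.coe_max' hne, WithBot.unbotD_coe]
  exact s.max'_mem hne

lemma mem_AdmSet {C : Finset (ℤ × ℤ)} : C ∈ AdmSet n O p ↔
    (C ⊆ Pfin n ∧ p ∈ C ∧ (∀ q ∈ C, ple n p q) ∧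
     (∀ q ∈ C, ∀ r ∈ C, ple n q r ∨ ple n r q) ∧
     (∀ q ∈ C, q ∈ O → ∀ r ∈ C, ple n q r → r = q)) := by
  unfold AdmSet
  rw [Finset.mem_filter, Finset.mem_powerset]

lemma singleton_mem_Adm (hp : p ∈ Pfin n) : {p} ∈ AdmSet n O p := by
  refine mem_AdmSet.mpr ⟨Finset.singleton_subset_iff.mpr hp, Finset.mem_singleton_self p,
    ?_, ?_, ?_⟩
  · intro q hq; rw [Finset.mem_singleton.mp hq]; exact ple_refl
  · intro q hq r hr; rw [Finset.mem_singleton.mp hq, Finset.mem_singleton.mp hr]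
    exact Or.inl ple_refl
  · intro q hq _ r hr _; rw [Finset.mem_singleton.mp hq, Finset.mem_singleton.mp hr]

variable (HX0 : ∀ p, inP n p → 0 ≤ X p)
variable (HXc : ∀ p ∈ O, ∀ C : Finset (ℤ × ℤ), SChain n O p C → ∑ q ∈ C, X q ≤ X p)

include HX0 in
lemma X_le_U (hp : p ∈ Pfin n) : X p ≤ Uval n O X p := by
  have : X p = ∑ q ∈ ({p} : Finset (ℤ × ℤ)), X q := by simp
  rw [this]
  exact le_maxunbot (Finset.mem_image_of_mem (fun C => ∑ q ∈ C, X q) (singleton_mem_Adm hp))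

include HX0 in
lemma U_nonneg (hp : p ∈ Pfin n) : 0 ≤ Uval n O X p :=
  le_trans (HX0 p (mem_Pfin.mp hp)) (X_le_U HX0 hp)

lemma U_le {B : ℤ} (h0 : 0 ≤ B) (h : ∀ C ∈ AdmSet n O p, ∑ q ∈ C, X q ≤ B) :
    Uval n O X p ≤ B := by
  apply maxunbot_le h0
  rintro a ha
  obtain ⟨C, hC, rfl⟩ := Finset.mem_image.mp ha
  exact h C hC

lemma U_attain (hp : p ∈ Pfin n) :
    ∃ C ∈ AdmSet n O p, ∑ q ∈ C, X q = Uval n O X p := by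
  have hne : ((AdmSet n O p).image (fun C => ∑ q ∈ C, X q)).Nonempty :=
    ⟨_, Finset.mem_image_of_mem _ (singleton_mem_Adm hp)⟩
  have := maxunbot_attain hne
  obtain ⟨C, hC, heq⟩ := Finset.mem_image.mp this
  exact ⟨C, hC, heq⟩

include HX0 in
lemma U_eq_of_O (hO : O ⊆ Pfin n) (hpO : p ∈ O) : Uval n O X p = X p := by
  apply le_antisymm
  · apply U_le (HX0 p (mem_Pfin.mp (hO hpO)))
    intro C hC
    obtain ⟨hsub, hpC, hmin, hch, htop⟩ := mem_AdmSet.mp hC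
    have hsing : C = {p} := by
      rw [Finset.eq_singleton_iff_unique_mem]
      exact ⟨hpC, fun x hx => htop p hpC hpO x hx (hmin x hx)⟩
    rw [hsing]; simp
  · exact X_le_U HX0 (hO hpO)

lemma insert_adm (hp : p ∈ Pfin n) (hpO : p ∉ O) (hne : p ≠ q) (hpq : ple n p q)
    {C : Finset (ℤ × ℤ)} (hC : C ∈ AdmSet n O q) :
    p ∉ C ∧ insert p C ∈ AdmSet n O p := by
  obtain ⟨hsub, hqC, hmin, hch, htop⟩ := mem_AdmSet.mp hC
  have hqP : q ∈ Pfin n := hsub hqC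
  have hpC : p ∉ C := by
    intro hin
    exact hne (ple_antisymm (mem_Pfin.mp hp) (mem_Pfin.mp hqP) hpq (hmin p hin))
  refine ⟨hpC, mem_AdmSet.mpr ⟨Finset.insert_subset hp hsub, Finset.mem_insert_self p C,
    ?_, ?_, ?_⟩⟩
  · intro s hs
    rcases Finset.mem_insert.mp hs with he | hsC
    · rw [he]; exact ple_refl
    · exact ple_trans hpq (hmin s hsC)
  · intro s hs t ht
    rcases Finset.mem_insert.mp hs with he | hsC
    · rcases Finset.mem_insert.mp ht with he' | htC
      · rw [he, he']; exact Or.inl ple_refl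
      · rw [he]; exact Or.inl (ple_trans hpq (hmin t htC))
    · rcases Finset.mem_insert.mp ht with he' | htC
      · rw [he']; exact Or.inr (ple_trans hpq (hmin s hsC))
      · exact hch s hsC t htC
  · intro s hs hsO t ht hst
    rcases Finset.mem_insert.mp hs with he | hsC
    · rw [he] at hsO; exact absurd hsO hpO
    · rcases Finset.mem_insert.mp ht with he' | htC
      · exfalso
        rw [he'] at hst
        have hps : p = s := ple_antisymm (mem_Pfin.mp hp) (mem_Pfin.mp (hsub hsC))
          (ple_trans hpq (hmin s hsC)) hst
        exact hpO (hps ▸ hsO)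
      · exact htop s hsC hsO t htC hst

include HX0 HXc in
lemma U_mono (hO : O ⊆ Pfin n) (hp : p ∈ Pfin n) (hq : q ∈ Pfin n) (hpq : ple n p q) :
    Uval n O X q ≤ Uval n O X p := by
  rcases eq_or_ne p q with rfl | hne
  · exact le_rfl
  by_cases hpO : p ∈ O
  · have h1 : Uval n O X q ≤ X p := by
      apply U_le (HX0 p (mem_Pfin.mp hp))
      intro C hC
      obtain ⟨hsub, hqC, hmin, hch, htop⟩ := mem_AdmSet.mp hC
      apply HXc p hpO
      refine ⟨hsub, ?_, hch, htop⟩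
      intro r hr
      refine ⟨ple_trans hpq (hmin r hr), ?_⟩
      rintro rfl
      exact hne (ple_antisymm (mem_Pfin.mp hp) (mem_Pfin.mp hq) hpq (hmin p hr))
    exact le_trans h1 (X_le_U HX0 hp)
  · apply U_le (U_nonneg HX0 hp)
    intro C hC
    obtain ⟨hpC, hins⟩ := insert_adm hp hpO hne hpq hC
    calc ∑ s ∈ C, X s ≤ ∑ s ∈ insert p C, X s := by
          rw [Finset.sum_insert hpC]
          have := HX0 p (mem_Pfin.mp hp)
          omega
      _ ≤ Uval n O X p := le_maxunbot (Finset.mem_image_of_mem (fun C => ∑ q ∈ C, X q) hins)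

include HX0 in
lemma V_nonneg : 0 ≤ Vval n O X p := by
  apply maxunbot_nonneg
  intro a ha
  obtain ⟨s, hs, rfl⟩ := Finset.mem_image.mp ha
  exact U_nonneg HX0 (Finset.mem_filter.mp hs).1

include HX0 HXc in
lemma V_le_U (hO : O ⊆ Pfin n) (hp : p ∈ Pfin n) : Vval n O X p ≤ Uval n O X p := by
  apply maxunbot_le (U_nonneg HX0 hp)
  intro a ha
  obtain ⟨s, hs, rfl⟩ := Finset.mem_image.mp ha
  obtain ⟨hsP, hps, _⟩ := Finset.mem_filter.mp hs
  exact U_mono HX0 HXc hO hp hsP hps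

include HX0 HXc in
lemma U_eq_XV (hO : O ⊆ Pfin n) (hp : p ∈ Pfin n) (hpO : p ∉ O) :
    Uval n O X p = X p + Vval n O X p := by
  apply le_antisymm
  · apply U_le (add_nonneg (HX0 p (mem_Pfin.mp hp)) (V_nonneg HX0))
    intro C hC
    obtain ⟨hsub, hpC, hmin, hch, htop⟩ := mem_AdmSet.mp hC
    have hsplit : ∑ s ∈ C, X s = X p + ∑ s ∈ C.erase p, X s :=
      (Finset.add_sum_erase C X hpC).symm
    rcases (C.erase p).eq_empty_or_nonempty with he | hne2
    · rw [hsplit, he]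
      simp only [Finset.sum_empty, add_zero]
      have := V_nonneg (p := p) HX0 (X := X) (O := O)
      omega
    · obtain ⟨q, hqC2, hqmin⟩ := chain_min (le_trans (Finset.erase_subset p C) hsub) hne2
        (fun a ha b hb => hch a (Finset.mem_of_mem_erase ha) b (Finset.mem_of_mem_erase hb))
      have hqC := Finset.mem_of_mem_erase hqC2
      have hqp : q ≠ p := Finset.ne_of_mem_erase hqC2
      have hCadm : C.erase p ∈ AdmSet n O q := by
        refine mem_AdmSet.mpr ⟨le_trans (Finset.erase_subset p C) hsub, hqC2, hqmin,
          ?_, ?_⟩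
        · intro a ha b hb
          exact hch a (Finset.mem_of_mem_erase ha) b (Finset.mem_of_mem_erase hb)
        · intro a ha haO b hb hab
          exact htop a (Finset.mem_of_mem_erase ha) haO b (Finset.mem_of_mem_erase hb) hab
      have h1 : ∑ s ∈ C.erase p, X s ≤ Uval n O X q :=
        le_maxunbot (Finset.mem_image_of_mem (fun C => ∑ q ∈ C, X q) hCadm)
      have h2 : Uval n O X q ≤ Vval n O X p := by
        apply le_maxunbot
        apply Finset.mem_image_of_mem (Uval n O X)
        exact Finset.mem_filter.mpr ⟨hsub hqC, hmin q hqC, fun h => hqp h.symm⟩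
      omega
  · rcases ((Pfin n).filter (fun q => ple n p q ∧ p ≠ q)).eq_empty_or_nonempty with he | hne
    · have hV : Vval n O X p = 0 := by unfold Vval; rw [he]; simp
      rw [hV, add_zero]
      exact X_le_U HX0 hp
    · have himg : (((Pfin n).filter (fun q => ple n p q ∧ p ≠ q)).image (Uval n O X)).Nonempty :=
        hne.image _
      obtain ⟨q, hqf, hq⟩ := Finset.mem_image.mp (maxunbot_attain himg)
      obtain ⟨hqP, hple, hpneq⟩ := Finset.mem_filter.mp hqf
      obtain ⟨Cq, hCq, hCsum⟩ := U_attain hqP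
      obtain ⟨hpnotin, hins⟩ := insert_adm hp hpO hpneq hple hCq
      have hVq : Vval n O X p = Uval n O X q := by
        unfold Vval; exact hq.symm
      have hfin : X p + Vval n O X p = ∑ s ∈ insert p Cq, X s := by
        rw [Finset.sum_insert hpnotin, hCsum, hVq]
      rw [hfin]
      exact le_maxunbot (Finset.mem_image_of_mem (fun C => ∑ q ∈ C, X q) hins)

end Aux3

/-- `λ_i = c_i + … + c_n` as an integer. -/
def LamZ (n : ℕ) (c : ℕ → ℕ) (i : ℕ) : ℤ := ∑ k ∈ Finset.Icc i n, (c k : ℤ)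

/-- Level ideal of the transfer function. -/
def Jlev (n : ℕ) (O : Finset (ℤ × ℤ)) (X : (ℤ × ℤ) → ℤ) (t : ℕ) : Finset (ℤ × ℤ) :=
  (Pfin n).filter (fun p => (t : ℤ) ≤ Uval n O X p)

/-- Number of diagonal entries of the level ideal. -/
def Kcard (n : ℕ) (c : ℕ → ℕ) (t : ℕ) : ℕ :=
  ((Finset.Icc 1 n).filter (fun i => (t : ℤ) ≤ LamZ n c i)).card

section Aux4

variable {n : ℕ} {O : Finset (ℤ × ℤ)} {p q r : ℤ × ℤ} {X : (ℤ × ℤ) → ℤ} {c : ℕ → ℕ}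

lemma diag_inP {i : ℕ} (hi1 : 1 ≤ i) (hi2 : i ≤ n) :
    inP n (((i : ℤ), (i : ℤ)) : ℤ × ℤ) := by
  unfold inP
  dsimp only
  rw [abs_of_nonneg (by positivity : (0:ℤ) ≤ (i : ℤ))]
  refine ⟨by exact_mod_cast hi1, by exact_mod_cast hi2, le_rfl, by exact_mod_cast hi2⟩

lemma diag_memO (hA : Aset n ⊆ O) {i : ℕ} (hi1 : 1 ≤ i) (hi2 : i ≤ n) :
    (((i : ℤ), (i : ℤ)) : ℤ × ℤ) ∈ O := by
  apply hA
  apply mem_Aset.mpr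
  exact ⟨by show (1:ℤ) ≤ (i:ℤ); exact_mod_cast hi1,
    by show (i:ℤ) ≤ (n:ℤ); exact_mod_cast hi2, rfl⟩

lemma ordKey_ge_one (h : inP n p) : 1 ≤ ordKey n p.2 := by
  obtain ⟨hz, hb1, hb2, _, _⟩ := inP_side h
  unfold ordKey
  split_ifs <;> omega

lemma ple_bottom (h : inP n p) : ple n (((1:ℤ), (1:ℤ)) : ℤ × ℤ) p := by
  obtain ⟨hz, hb1, hb2, h1, h2⟩ := inP_side h
  refine ⟨by dsimp only; omega, ?_⟩
  have hk := ordKey_ge_one h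
  have : ordKey n (((1:ℤ), (1:ℤ)) : ℤ × ℤ).2 = 1 := by
    show ordKey n 1 = 1
    unfold ordKey
    rw [if_pos one_pos]
  omega

lemma LamZ_nonneg (i : ℕ) : 0 ≤ LamZ n c i :=
  Finset.sum_nonneg fun k _ => by positivity

lemma LamZ_antitone {i i' : ℕ} (h : i ≤ i') : LamZ n c i' ≤ LamZ n c i := by
  apply Finset.sum_le_sum_of_subset_of_nonneg
  · intro k hk
    rw [Finset.mem_Icc] at *
    omega
  · intro k _ _
    positivity

lemma LamZ_succ {k : ℕ} (hk1 : 1 ≤ k) (hk2 : k ≤ n) :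
    LamZ n c k = (c k : ℤ) + LamZ n c (k + 1) := by
  unfold LamZ
  have h : Finset.Icc k n = insert k (Finset.Icc (k + 1) n) := by
    ext s; simp only [Finset.mem_Icc, Finset.mem_insert]; omega
  rw [h, Finset.sum_insert (by rw [Finset.mem_Icc]; omega)]

lemma LamZ_top : LamZ n c (n + 1) = 0 := by
  unfold LamZ
  rw [Finset.Icc_eq_empty (by omega), Finset.sum_empty]

variable (HX0 : ∀ p, inP n p → 0 ≤ X p)
variable (HXc : ∀ p ∈ O, ∀ C : Finset (ℤ × ℤ), SChain n O p C → ∑ q ∈ C, X q ≤ X p)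
variable (HXd : ∀ i ∈ Finset.Icc 1 n, X (((i : ℤ), (i : ℤ)) : ℤ × ℤ) = LamZ n c i)

include HX0 HXc in
lemma Jlev_ideal (hO : O ⊆ Pfin n) (t : ℕ) : IsIdeal n (Jlev n O X t) := by
  constructor
  · intro p hp
    exact mem_Pfin.mp (Finset.mem_filter.mp hp).1
  · intro p hp q hq hple
    obtain ⟨hpP, hpU⟩ := Finset.mem_filter.mp hp
    refine Finset.mem_filter.mpr ⟨hq, le_trans hpU (U_mono HX0 HXc hO hq hpP hple)⟩

include HX0 HXd in
lemma U_diag (hA : Aset n ⊆ O) (hO : O ⊆ Pfin n) {i : ℕ} (hi1 : 1 ≤ i) (hi2 : i ≤ n) :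
    Uval n O X (((i : ℤ), (i : ℤ)) : ℤ × ℤ) = LamZ n c i := by
  rw [U_eq_of_O HX0 hO (diag_memO hA hi1 hi2)]
  exact HXd i (Finset.mem_Icc.mpr ⟨hi1, hi2⟩)

include HX0 HXc HXd in
lemma U_le_T (hA : Aset n ⊆ O) (hO : O ⊆ Pfin n) (hp : p ∈ Pfin n) :
    Uval n O X p ≤ LamZ n c 1 := by
  have hinP := mem_Pfin.mp hp
  obtain ⟨_, _, _, h1, h2⟩ := inP_side hinP
  have hn : 1 ≤ n := by omega
  have h11 : (((1:ℤ), (1:ℤ)) : ℤ × ℤ) ∈ Pfin n := by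
    apply mem_Pfin.mpr
    have := diag_inP (n := n) (i := 1) le_rfl hn
    simpa using this
  have hU : Uval n O X (((1:ℤ), (1:ℤ)) : ℤ × ℤ) = LamZ n c 1 := by
    have := U_diag HX0 HXd hA hO (i := 1) le_rfl hn
    simpa using this
  calc Uval n O X p ≤ Uval n O X (((1:ℤ), (1:ℤ)) : ℤ × ℤ) :=
        U_mono HX0 HXc hO h11 hp (ple_bottom hinP)
    _ = LamZ n c 1 := hU

include HX0 HXd in
lemma diag_mem_Jlev (hA : Aset n ⊆ O) (hO : O ⊆ Pfin n) {i t : ℕ} (hi1 : 1 ≤ i) (hi2 : i ≤ n) :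
    ((((i : ℤ), (i : ℤ)) : ℤ × ℤ) ∈ Jlev n O X t ↔ (t : ℤ) ≤ LamZ n c i) := by
  unfold Jlev
  rw [Finset.mem_filter, U_diag HX0 HXd hA hO hi1 hi2]
  constructor
  · exact fun h => h.2
  · exact fun h => ⟨mem_Pfin.mpr (diag_inP hi1 hi2), h⟩

lemma inter_A_card {J : Finset (ℤ × ℤ)} {Q : ℕ → Prop} [DecidablePred Q]
    (hJmem : ∀ i : ℕ, 1 ≤ i → i ≤ n → (((((i : ℤ), (i : ℤ))) : ℤ × ℤ) ∈ J ↔ Q i)) :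
    (J ∩ Aset n).card = ((Finset.Icc 1 n).filter Q).card := by
  have himg : J ∩ Aset n
      = ((Finset.Icc 1 n).filter Q).image (fun i : ℕ => (((i : ℤ), (i : ℤ)) : ℤ × ℤ)) := by
    ext p
    simp only [Finset.mem_inter, Finset.mem_image, Finset.mem_filter, Finset.mem_Icc]
    constructor
    · rintro ⟨hpJ, hpA⟩
      obtain ⟨a1, a2, a3⟩ := mem_Aset.mp hpA
      have e : ((p.1.toNat : ℤ), (p.1.toNat : ℤ)) = p := by
        have h : (p.1.toNat : ℤ) = p.1 := by omega
        rw [h]; exact Prod.ext rfl a3.symm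
      refine ⟨p.1.toNat, ⟨⟨by omega, by omega⟩, ?_⟩, e⟩
      apply (hJmem p.1.toNat (by omega) (by omega)).mp
      rw [e]; exact hpJ
    · rintro ⟨i, ⟨⟨hi1, hi2⟩, hQ⟩, rfl⟩
      refine ⟨(hJmem i hi1 hi2).mpr hQ, mem_Aset.mpr ⟨?_, ?_, rfl⟩⟩
      · show (1:ℤ) ≤ (i:ℤ); exact_mod_cast hi1
      · show (i:ℤ) ≤ (n:ℤ); exact_mod_cast hi2
  rw [himg, Finset.card_image_of_injective]
  intro a b hab
  simp only [Prod.mk.injEq] at hab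
  exact_mod_cast hab.1

include HX0 HXd in
lemma card_Jlev_A (hA : Aset n ⊆ O) (hO : O ⊆ Pfin n) (t : ℕ) :
    (Jlev n O X t ∩ Aset n).card = Kcard n c t := by
  unfold Kcard
  exact inter_A_card (Q := fun i => (t : ℤ) ≤ LamZ n c i)
    (fun i hi1 hi2 => diag_mem_Jlev HX0 HXd hA hO hi1 hi2)

lemma Kcard_le (t : ℕ) : Kcard n c t ≤ n := by
  unfold Kcard
  calc ((Finset.Icc 1 n).filter _).card ≤ (Finset.Icc 1 n).card :=
        Finset.card_filter_le _ _
    _ = n := by rw [Nat.card_Icc]; omega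

lemma Kcard_eq_iff {t k : ℕ} (ht : 1 ≤ t) (hk1 : 1 ≤ k) (hk2 : k ≤ n) :
    Kcard n c t = k ↔ ((t : ℤ) ≤ LamZ n c k ∧ LamZ n c (k + 1) < (t : ℤ)) := by
  constructor
  · intro h
    by_contra hcon
    rw [not_and_or, not_le, not_lt] at hcon
    rcases hcon with hcon | hcon
    · -- LamZ k < t : filter ⊆ Icc 1 (k-1), card < k
      have hsub : (Finset.Icc 1 n).filter (fun i => (t : ℤ) ≤ LamZ n c i)
          ⊆ Finset.Icc 1 (k - 1) := by
        intro i hi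
        obtain ⟨hiI, hiL⟩ := Finset.mem_filter.mp hi
        obtain ⟨hi1, hi2⟩ := Finset.mem_Icc.mp hiI
        rw [Finset.mem_Icc]
        refine ⟨hi1, ?_⟩
        by_contra hik
        have : LamZ n c i ≤ LamZ n c k := LamZ_antitone (by omega)
        omega
      have := Finset.card_le_card hsub
      rw [Nat.card_Icc] at this
      unfold Kcard at h
      omega
    · -- t ≤ LamZ (k+1)
      rcases eq_or_lt_of_le hk2 with rfl | hlt
      · rw [LamZ_top] at hcon
        omega
      · have hsub : Finset.Icc 1 (k + 1)
            ⊆ (Finset.Icc 1 n).filter (fun i => (t : ℤ) ≤ LamZ n c i) := by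
          intro i hi
          obtain ⟨hi1, hi2⟩ := Finset.mem_Icc.mp hi
          refine Finset.mem_filter.mpr ⟨Finset.mem_Icc.mpr ⟨hi1, by omega⟩, ?_⟩
          exact le_trans hcon (LamZ_antitone (by omega))
        have := Finset.card_le_card hsub
        rw [Nat.card_Icc] at this
        unfold Kcard at h
        omega
  · rintro ⟨h1, h2⟩
    have hfil : (Finset.Icc 1 n).filter (fun i => (t : ℤ) ≤ LamZ n c i)
        = Finset.Icc 1 k := by
      ext i
      simp only [Finset.mem_filter, Finset.mem_Icc]
      constructor
      · rintro ⟨⟨hi1, hi2⟩, hiL⟩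
        refine ⟨hi1, ?_⟩
        by_contra hik
        have : LamZ n c i ≤ LamZ n c (k + 1) := LamZ_antitone (by omega)
        omega
      · rintro ⟨hi1, hi2⟩
        exact ⟨⟨hi1, by omega⟩, le_trans h1 (LamZ_antitone hi2)⟩
    unfold Kcard
    rw [hfil, Nat.card_Icc]
    omega

lemma Kcard_count {k : ℕ} (hk1 : 1 ≤ k) (hk2 : k ≤ n) :
    ((Finset.Icc 1 (LamZ n c 1).toNat).filter (fun t => Kcard n c t = k)).card = c k := by
  have hkk : LamZ n c k = (c k : ℤ) + LamZ n c (k + 1) := LamZ_succ hk1 hk2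
  have hnn : 0 ≤ LamZ n c (k + 1) := LamZ_nonneg _
  have hnn2 : 0 ≤ LamZ n c k := LamZ_nonneg _
  have hle1 : LamZ n c k ≤ LamZ n c 1 := LamZ_antitone hk1
  have hfil : (Finset.Icc 1 (LamZ n c 1).toNat).filter (fun t => Kcard n c t = k)
      = Finset.Icc ((LamZ n c (k + 1)).toNat + 1) ((LamZ n c k).toNat) := by
    ext t
    simp only [Finset.mem_filter, Finset.mem_Icc]
    constructor
    · rintro ⟨⟨ht1, ht2⟩, htk⟩
      obtain ⟨ha, hb⟩ := (Kcard_eq_iff ht1 hk1 hk2).mp htk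
      omega
    · rintro ⟨ht1, ht2⟩
      have ht1' : 1 ≤ t := by omega
      refine ⟨⟨ht1', by omega⟩, ?_⟩
      apply (Kcard_eq_iff ht1' hk1 hk2).mpr
      omega
  rw [hfil, Nat.card_Icc]
  omega

lemma Kcard_pos {t : ℕ} (ht1 : 1 ≤ t) (ht2 : (t : ℤ) ≤ LamZ n c 1) (hn : 1 ≤ n) :
    1 ≤ Kcard n c t := by
  apply Finset.card_pos.mpr
  exact ⟨1, Finset.mem_filter.mpr ⟨Finset.mem_Icc.mpr ⟨le_rfl, hn⟩, ht2⟩⟩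

include HX0 HXc HXd in
lemma pointwise_decomp (hA : Aset n ⊆ O) (hO : O ⊆ Pfin n)
    (HXz : ∀ p, ¬ inP n p → X p = 0) (p : ℤ × ℤ) :
    X p = ∑ t ∈ Finset.Icc 1 (LamZ n c 1).toNat,
      (if p ∈ MO n O (Jlev n O X t) then (1 : ℤ) else 0) := by
  rw [Finset.sum_boole]
  by_cases hp : p ∈ Pfin n
  case neg =>
    have hzero : ∀ t, p ∉ MO n O (Jlev n O X t) := by
      intro t hmem
      exact hp (Finset.mem_filter.mp (MO_subset hmem)).1
    have : (Finset.Icc 1 (LamZ n c 1).toNat).filter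
        (fun t => p ∈ MO n O (Jlev n O X t)) = ∅ := by
      apply Finset.filter_false_of_mem
      intro t _
      exact hzero t
    rw [this, HXz p (fun h => hp (mem_Pfin.mpr h))]
    simp
  case pos =>
    have hU0 : 0 ≤ Uval n O X p := U_nonneg HX0 hp
    have hUT : Uval n O X p ≤ LamZ n c 1 := U_le_T HX0 HXc HXd hA hO hp
    by_cases hpO : p ∈ O
    · -- p ∈ O : membership in MO(J t) ↔ t ≤ U p
      have hmem : ∀ t : ℕ, (p ∈ MO n O (Jlev n O X t) ↔ (t : ℤ) ≤ Uval n O X p) := by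
        intro t
        rw [mem_MO_of_O hpO]
        unfold Jlev
        rw [Finset.mem_filter]
        exact ⟨fun h => h.2, fun h => ⟨hp, h⟩⟩
      have hfil : (Finset.Icc 1 (LamZ n c 1).toNat).filter
          (fun t => p ∈ MO n O (Jlev n O X t)) = Finset.Icc 1 (Uval n O X p).toNat := by
        ext t
        simp only [Finset.mem_filter, Finset.mem_Icc, hmem]
        omega
      rw [hfil, Nat.card_Icc]
      have hXU : Uval n O X p = X p := U_eq_of_O HX0 hO hpO
      omega
    · -- p ∉ O
      have hV0 : 0 ≤ Vval n O X p := V_nonneg HX0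
      have hVU : Vval n O X p ≤ Uval n O X p := V_le_U HX0 HXc hO hp
      have hXV : Uval n O X p = X p + Vval n O X p := U_eq_XV HX0 HXc hO hp hpO
      have hmem : ∀ t : ℕ, 1 ≤ t → (p ∈ MO n O (Jlev n O X t)
          ↔ (Vval n O X p < (t : ℤ) ∧ (t : ℤ) ≤ Uval n O X p)) := by
        intro t ht
        rw [mem_MO_of_notO hpO]
        constructor
        · rintro ⟨hpJ, hmax⟩
          have hpU : (t : ℤ) ≤ Uval n O X p := (Finset.mem_filter.mp hpJ).2
          refine ⟨?_, hpU⟩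
          by_contra hcon
          rw [not_lt] at hcon
          -- t ≤ V p : V attained at some q ≻ p, q ∈ J t, contradiction with maximality
          rcases ((Pfin n).filter (fun q => ple n p q ∧ p ≠ q)).eq_empty_or_nonempty
            with he | hne
          · have : Vval n O X p = 0 := by unfold Vval; rw [he]; simp
            omega
          · obtain ⟨q, hqf, hq⟩ := Finset.mem_image.mp
              (maxunbot_attain (hne.image (Uval n O X)))
            obtain ⟨hqP, hple, hpneq⟩ := Finset.mem_filter.mp hqf
            have hVq : Uval n O X q = Vval n O X p := by
              rw [hq]; rfl
            have hqJ : q ∈ Jlev n O X t :=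
              Finset.mem_filter.mpr ⟨hqP, by omega⟩
            exact hpneq ((hmax q hqJ hple).symm)
        · rintro ⟨h1, h2⟩
          refine ⟨Finset.mem_filter.mpr ⟨hp, h2⟩, ?_⟩
          intro q hqJ hple
          by_contra hne
          obtain ⟨hqP, hqU⟩ := Finset.mem_filter.mp hqJ
          have : Uval n O X q ≤ Vval n O X p := by
            apply le_maxunbot
            apply Finset.mem_image_of_mem (Uval n O X)
            exact Finset.mem_filter.mpr ⟨hqP, hple, fun h => hne h.symm⟩
          omega
      have hfil : (Finset.Icc 1 (LamZ n c 1).toNat).filter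
          (fun t => p ∈ MO n O (Jlev n O X t))
          = Finset.Icc ((Vval n O X p).toNat + 1) (Uval n O X p).toNat := by
        ext t
        simp only [Finset.mem_filter, Finset.mem_Icc]
        constructor
        · rintro ⟨⟨ht1, ht2⟩, htm⟩
          obtain ⟨ha, hb⟩ := (hmem t ht1).mp htm
          omega
        · rintro ⟨ht1, ht2⟩
          have ht1' : 1 ≤ t := by omega
          refine ⟨⟨ht1', by omega⟩, ?_⟩
          apply (hmem t ht1').mpr
          omega
      rw [hfil, Nat.card_Icc]
      omega

end Aux4

section Aux5

variable {n : ℕ} {O : Finset (ℤ × ℤ)} {c : ℕ → ℕ}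

lemma islat_indic {J : Finset (ℤ × ℤ)} : IsLat (indicMO n O J) := by
  intro p
  unfold indicMO
  split_ifs
  · exact ⟨1, by norm_num⟩
  · exact ⟨0, by norm_num⟩

lemma islat_sum {ι : Type*} {s : Finset ι} {f : ι → (ℤ × ℤ) → ℝ}
    (h : ∀ i ∈ s, IsLat (f i)) : IsLat (∑ i ∈ s, f i) := by
  classical
  induction s using Finset.induction_on with
  | empty => exact fun p => ⟨0, by simp⟩
  | insert a s' hnm ih =>
    intro p
    rw [Finset.sum_insert hnm]
    obtain ⟨m1, h1⟩ := h a (Finset.mem_insert_self a s') p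
    obtain ⟨m2, h2⟩ := ih (fun i hi => h i (Finset.mem_insert_of_mem hi)) p
    exact ⟨m1 + m2, by rw [Pi.add_apply, h1, h2]; push_cast; ring⟩

lemma sum_mem_nsmul {Q : Set ((ℤ × ℤ) → ℝ)} {s : Finset ℕ} {f : ℕ → (ℤ × ℤ) → ℝ}
    (h : ∀ t ∈ s, f t ∈ Q) : ∑ t ∈ s, f t ∈ s.card • Q := by
  classical
  induction s using Finset.induction_on with
  | empty =>
    rw [Finset.sum_empty, Finset.card_empty, zero_nsmul]
    exact Set.mem_zero.mpr rfl
  | insert a s' hnm ih =>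
    rw [Finset.sum_insert hnm, Finset.card_insert_of_notMem hnm, succ_nsmul, add_comm]
    exact Set.add_mem_add (h a (Finset.mem_insert_self a s'))
      (ih (fun t ht => h t (Finset.mem_insert_of_mem ht)))

lemma mem_sum_sets {s : Finset ℕ} {F : ℕ → Set ((ℤ × ℤ) → ℝ)} {f : ℕ → (ℤ × ℤ) → ℝ}
    (h : ∀ k ∈ s, f k ∈ F k) : ∑ k ∈ s, f k ∈ ∑ k ∈ s, F k := by
  classical
  induction s using Finset.induction_on with
  | empty =>
    rw [Finset.sum_empty, Finset.sum_empty]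
    exact Set.mem_zero.mpr rfl
  | insert a s' hnm ih =>
    rw [Finset.sum_insert hnm, Finset.sum_insert hnm]
    exact Set.add_mem_add (h a (Finset.mem_insert_self a s'))
      (ih (fun k hk => h k (Finset.mem_insert_of_mem hk)))

theorem QO_decomp (hA : Aset n ⊆ O) (hO : O ⊆ Pfin n) (c : ℕ → ℕ) {x : (ℤ × ℤ) → ℝ}
    (hx : x ∈ QO n O c) (hlat : IsLat x) :
    ∃ (T : ℕ) (J : ℕ → Finset (ℤ × ℤ)) (kf : ℕ → ℕ),
      (∀ t ∈ Finset.Icc 1 T, IsIdeal n (J t) ∧ (J t ∩ Aset n).card = kf t) ∧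
      (∀ t ∈ Finset.Icc 1 T, kf t ∈ Finset.Icc 1 n) ∧
      x = ∑ t ∈ Finset.Icc 1 T, indicMO n O (J t) ∧
      (∀ k ∈ Finset.Icc 1 n, ((Finset.Icc 1 T).filter (fun t => kf t = k)).card = c k) := by
  obtain ⟨h0, hz, hd, hc⟩ := QO_valid hA hO c hx
  choose X hX using hlat
  have HX0 : ∀ p, inP n p → 0 ≤ X p := by
    intro p hp
    have := h0 p hp
    rw [hX] at this
    exact_mod_cast this
  have HXz : ∀ p, ¬ inP n p → X p = 0 := by
    intro p hp
    have := hz p hp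
    rw [hX] at this
    exact_mod_cast this
  have HXc : ∀ p ∈ O, ∀ C : Finset (ℤ × ℤ), SChain n O p C → ∑ q ∈ C, X q ≤ X p := by
    intro p hp C hC
    have h1 := hc p hp C hC
    have hsum : ∑ q ∈ C, x q = ((∑ q ∈ C, X q : ℤ) : ℝ) := by
      push_cast
      exact Finset.sum_congr rfl fun q _ => hX q
    rw [hsum, hX] at h1
    exact_mod_cast h1
  have HXd : ∀ i ∈ Finset.Icc 1 n, X (((i : ℤ), (i : ℤ)) : ℤ × ℤ) = LamZ n c i := by
    intro i hi
    have h1 := hd i hi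
    rw [hX] at h1
    have h2 : ((LamZ n c i : ℤ) : ℝ) = ((∑ k ∈ Finset.Icc i n, c k : ℕ) : ℝ) := by
      unfold LamZ
      push_cast
      rfl
    have : ((X (((i : ℤ), (i : ℤ)) : ℤ × ℤ) : ℤ) : ℝ) = ((LamZ n c i : ℤ) : ℝ) := by
      rw [h1, h2]
    exact_mod_cast this
  refine ⟨(LamZ n c 1).toNat, Jlev n O X, Kcard n c, ?_, ?_, ?_, ?_⟩
  · intro t _
    exact ⟨Jlev_ideal HX0 HXc hO t, card_Jlev_A HX0 HXd hA hO t⟩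
  · intro t ht
    obtain ⟨ht1, ht2⟩ := Finset.mem_Icc.mp ht
    have hn : 1 ≤ n := by
      by_contra hn0
      have hn0' : n = 0 := by omega
      have : LamZ n c 1 = 0 := by
        unfold LamZ
        rw [hn0', Finset.Icc_eq_empty (by omega), Finset.sum_empty]
      omega
    exact Finset.mem_Icc.mpr ⟨Kcard_pos ht1 (by omega) hn, Kcard_le t⟩
  · funext p
    rw [Finset.sum_apply, hX p, pointwise_decomp HX0 HXc HXd hA hO HXz p]
    push_cast
    apply Finset.sum_congr rfl
    intro t _
    unfold indicMO
    split_ifs <;> norm_num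
  · intro k hk
    obtain ⟨hk1, hk2⟩ := Finset.mem_Icc.mp hk
    exact Kcard_count hk1 hk2

end Aux5
/-- Minkowski sum property of lattice points:
`𝒬_O(λ+μ) ∩ ℤ^P = (𝒬_O(λ) ∩ ℤ^P) + (𝒬_O(μ) ∩ ℤ^P)`. -/
theorem stmt8 (n : ℕ) (O : Finset (ℤ × ℤ)) (hA : Aset n ⊆ O) (hO : O ⊆ Pfin n)
    (a b : ℕ → ℕ) :
    QO n O (fun k => a k + b k) ∩ {x | IsLat x}
      = (QO n O a ∩ {x | IsLat x}) + (QO n O b ∩ {x | IsLat x}) := by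
  ext x
  simp only [Set.mem_inter_iff, Set.mem_setOf_eq]
  constructor
  · rintro ⟨hxQ, hxL⟩
    obtain ⟨T, J, kf, hJ, hkrange, hxeq, hcount⟩ := QO_decomp hA hO _ hxQ hxL
    have hex : ∀ k ∈ Finset.Icc 1 n, ∃ Ak : Finset ℕ,
        Ak ⊆ (Finset.Icc 1 T).filter (fun t => kf t = k) ∧ Ak.card = a k := by
      intro k hk
      obtain ⟨Ak, h1, h2⟩ := Finset.exists_subset_card_eq (n := a k)
        (by rw [hcount k hk]; omega)
      exact ⟨Ak, h1, h2⟩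
    choose! Ak hAsub hAcard using hex
    set y := ∑ k ∈ Finset.Icc 1 n, ∑ t ∈ Ak k, indicMO n O (J t) with hydef
    set z := ∑ k ∈ Finset.Icc 1 n,
      ∑ t ∈ ((Finset.Icc 1 T).filter (fun t => kf t = k)) \ Ak k, indicMO n O (J t) with hzdef
    have hxyz : x = y + z := by
      rw [hxeq, ← Finset.sum_fiberwise_of_maps_to hkrange (fun t => indicMO n O (J t)),
        hydef, hzdef, ← Finset.sum_add_distrib]
      apply Finset.sum_congr rfl
      intro k hk
      rw [← Finset.sum_sdiff (hAsub k hk), add_comm]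
    have hyQ : y ∈ QO n O a := by
      rw [hydef]
      apply mem_sum_sets
      intro k hk
      rw [← hAcard k hk]
      apply sum_mem_nsmul
      intro t ht
      have htS := hAsub k hk ht
      obtain ⟨htI, htk⟩ := Finset.mem_filter.mp htS
      apply subset_convexHull
      exact ⟨J t, (hJ t htI).1, by rw [(hJ t htI).2, htk], rfl⟩
    have hzQ : z ∈ QO n O b := by
      rw [hzdef]
      apply mem_sum_sets
      intro k hk
      have hcardz : (((Finset.Icc 1 T).filter (fun t => kf t = k)) \ Ak k).card = b k := by
        rw [Finset.card_sdiff_of_subset (hAsub k hk), hcount k hk, hAcard k hk]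
        omega
      rw [← hcardz]
      apply sum_mem_nsmul
      intro t ht
      have htS := Finset.mem_sdiff.mp ht
      obtain ⟨htI, htk⟩ := Finset.mem_filter.mp htS.1
      apply subset_convexHull
      exact ⟨J t, (hJ t htI).1, by rw [(hJ t htI).2, htk], rfl⟩
    have hyL : IsLat y := by
      rw [hydef]
      exact islat_sum (fun k _ => islat_sum (fun t _ => islat_indic))
    have hzL : IsLat z := by
      rw [hzdef]
      exact islat_sum (fun k _ => islat_sum (fun t _ => islat_indic))
    exact Set.mem_add.mpr ⟨y, ⟨hyQ, hyL⟩, z, ⟨hzQ, hzL⟩, hxyz.symm⟩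
  · intro hmem
    obtain ⟨y, hy, z, hz, rfl⟩ := Set.mem_add.mp hmem
    obtain ⟨hyQ, hyL⟩ := hy
    obtain ⟨hzQ, hzL⟩ := hz
    constructor
    · show y + z ∈ ∑ k ∈ Finset.Icc 1 n, (a k + b k) • QOfund n O k
      have hsplit : ∑ k ∈ Finset.Icc 1 n, (a k + b k) • QOfund n O k
          = ∑ k ∈ Finset.Icc 1 n, (a k • QOfund n O k)
            + ∑ k ∈ Finset.Icc 1 n, (b k • QOfund n O k) := by
        rw [← Finset.sum_add_distrib]
        exact Finset.sum_congr rfl fun k _ => add_nsmul _ _ _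
      rw [hsplit]
      exact Set.add_mem_add hyQ hzQ
    · intro p
      obtain ⟨m1, h1⟩ := hyL p
      obtain ⟨m2, h2⟩ := hzL p
      exact ⟨m1 + m2, by rw [Pi.add_apply, h1, h2]; push_cast; ring⟩

end
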